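/- Let S ⊆ ℤ^ω be an analytic set that is not Haar-null. Then for every b ∈ ω^ω there exist a compact set K ⊆ Π_{n∈ω}[0, b(n)] with μ_b(K) > 0 and t ∈ ℤ^ω such that K + t ⊆ S. -/

import Mathlib

open MeasureTheory Filter

noncomputable section

/-- A subset of `ℤ^ω` is universally measurable if it is measurable with respect to the
completion of every Borel probability measure on `ℤ^ω`. -/
def UnivMeasurable (U : Set (ℕ → ℤ)) : Prop :=
  ∀ μ : Measure (ℕ → ℤ), IsProbabilityMeasure μ → NullMeasurableSet U μ

/-- Christensen's notion: `S ⊆ ℤ^ω` is Haar-null if there are a universally measurable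
`U ⊇ S` and a Borel probability measure `μ` with `μ (U + g) = 0` for every `g ∈ ℤ^ω`. -/
def IsHaarNull (S : Set (ℕ → ℤ)) : Prop :=
  ∃ (U : Set (ℕ → ℤ)) (μ : Measure (ℕ → ℤ)),
    S ⊆ U ∧ UnivMeasurable U ∧ IsProbabilityMeasure μ ∧
    ∀ g : ℕ → ℤ, μ ((fun x => x + g) '' U) = 0

/-- Eventual domination `f ≤* g`: `f n ≤ g n` for all but finitely many `n`. -/
def EvLE (f g : ℕ → ℕ) : Prop := ∀ᶠ n in atTop, f n ≤ g n

/-- A dominating family in Baire space. -/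
def Dominating (S : Set (ℕ → ℕ)) : Prop := ∀ f : ℕ → ℕ, ∃ g ∈ S, EvLE f g

/-- `∏_{i<n} (b i + 1)`. -/
def basePow (b : ℕ → ℕ) (n : ℕ) : ℕ := ∏ i ∈ Finset.range n, (b i + 1)

/-- The digits of `x ∈ [0,1)` in the mixed-radix expansion with bases `b n + 1`;
the `n`-th digit is uniformly distributed on `{0, …, b n}`, and the digits are independent. -/
def digitMap (b : ℕ → ℕ) (x : ℝ) : ℕ → ℤ :=
  fun n => ⌊x * (basePow b (n + 1) : ℝ)⌋ - (b n + 1) * ⌊x * (basePow b n : ℝ)⌋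

/-- `μ_b`: the product probability measure on `ℤ^ω` whose `n`-th factor is the uniform
probability measure on `{0, 1, …, b n} ⊆ ℤ`, realized as the joint distribution of the
mixed-radix digits (with bases `b n + 1`) of a uniformly random point of `[0,1)`.
(Applied to an arbitrary set it gives the outer measure `μ_b^*`.) -/
def muB (b : ℕ → ℕ) : Measure (ℕ → ℤ) :=
  Measure.map (digitMap b) (volume.restrict (Set.Ico (0 : ℝ) 1))

end

open Set Topology
open scoped ENNReal

lemma digitMap_mem (b : ℕ → ℕ) (x : ℝ) (n : ℕ) :
    0 ≤ digitMap b x n ∧ digitMap b x n ≤ (b n : ℤ) := by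
  have hP : (basePow b (n + 1) : ℝ) = (basePow b n : ℝ) * ((b n : ℝ) + 1) := by
    rw [basePow, Finset.prod_range_succ, ← basePow]; push_cast; ring
  set y : ℝ := x * (basePow b n : ℝ) with hy
  have hxy : x * (basePow b (n + 1) : ℝ) = y * ((b n : ℝ) + 1) := by rw [hP, hy]; ring
  have h1 : ((b n : ℤ) + 1) * ⌊y⌋ ≤ ⌊y * ((b n : ℝ) + 1)⌋ := by
    apply Int.le_floor.mpr
    push_cast
    nlinarith [Int.floor_le y, Nat.cast_nonneg (α := ℝ) (b n)]
  have h2 : ⌊y * ((b n : ℝ) + 1)⌋ < ((b n : ℤ) + 1) * (⌊y⌋ + 1) := by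
    apply Int.floor_lt.mpr
    push_cast
    nlinarith [Int.lt_floor_add_one y, Nat.cast_nonneg (α := ℝ) (b n)]
  have h3 : ((b n : ℤ) + 1) * (⌊y⌋ + 1) = ((b n : ℤ) + 1) * ⌊y⌋ + (b n + 1) := by ring
  constructor
  · simp only [digitMap, ← hy, hxy]; linarith
  · simp only [digitMap, ← hy, hxy]; linarith

lemma measurable_digitMap (b : ℕ → ℕ) : Measurable (digitMap b) := by
  apply measurable_pi_lambda
  intro n
  exact ((measurable_id.mul_const _).floor).sub
    (((measurable_id.mul_const _).floor).const_mul _)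

lemma muB_prob (b : ℕ → ℕ) : IsProbabilityMeasure (muB b) := by
  constructor
  rw [muB, Measure.map_apply (measurable_digitMap b) MeasurableSet.univ]
  simp [Real.volume_Ico]

/-- Capacitability: an analytic subset of `ℤ^ω` of measure `> c` (finite Borel measure,
outer measure sense) contains a compact subset of measure `≥ c`. -/
lemma analyticSet_exists_isCompact_subset
    (μ : Measure (ℕ → ℤ)) [IsFiniteMeasure μ] {A : Set (ℕ → ℤ)}
    (hA : AnalyticSet A) {c : ℝ≥0∞} (hc : c < μ A) :
    ∃ K, K ⊆ A ∧ IsCompact K ∧ c ≤ μ K := by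
  classical
  rw [AnalyticSet] at hA
  rcases hA with rfl | ⟨f, fc, rfl⟩
  · exact absurd hc (by simp)
  set D : (ℕ → ℕ) → ℕ → Set (ℕ → ℕ) := fun k n => {x | ∀ i < n, x i ≤ k i} with hD
  have hDcongr : ∀ (k₁ k₂ : ℕ → ℕ) (n : ℕ), (∀ i < n, k₁ i = k₂ i) → D k₁ n = D k₂ n := by
    intro k₁ k₂ n h
    ext x
    constructor <;> intro hx i hi
    · rw [← h i hi]; exact hx i hi
    · rw [h i hi]; exact hx i hi
  have step : ∀ k : ℕ → ℕ, ∀ n : ℕ, c < μ (f '' D k n) →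
      ∃ m, c < μ (f '' D (Function.update k n m) (n + 1)) := by
    intro k n hkn
    have hmono : Monotone (fun m => f '' D (Function.update k n m) (n + 1)) := by
      intro m₁ m₂ hm
      apply Set.image_mono
      intro x hx i hi
      rcases Nat.lt_succ_iff_lt_or_eq.1 hi with hi' | rfl
      · simpa [Function.update, Nat.ne_of_lt hi'] using hx i hi
      · have := hx i (Nat.lt_succ_self i)
        simp only [Function.update_self] at this ⊢
        exact this.trans hm
    have hunion : ⋃ m, D (Function.update k n m) (n + 1) = D k n := by
      ext x
      simp only [Set.mem_iUnion, Set.mem_setOf_eq, hD]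
      constructor
      · rintro ⟨m, hx⟩ i hi
        have := hx i (hi.trans (Nat.lt_succ_self n))
        simpa [Function.update, Nat.ne_of_lt hi] using this
      · intro hx
        refine ⟨x n, fun i hi => ?_⟩
        rcases Nat.lt_succ_iff_lt_or_eq.1 hi with hi' | rfl
        · simpa [Function.update, Nat.ne_of_lt hi'] using hx i hi'
        · simp
    have := hmono.measure_iUnion (μ := μ)
    rw [← Set.image_iUnion, hunion] at this
    rw [this] at hkn
    exact lt_iSup_iff.1 hkn
  choose! h hh using step
  set F : ℕ → (ℕ → ℕ) := fun n => Nat.rec (fun _ => 0) (fun n Fn => Function.update Fn n (h Fn n)) n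
    with hF
  have hFs : ∀ n, F (n + 1) = Function.update (F n) n (h (F n) n) := fun _ => rfl
  set k : ℕ → ℕ := fun n => F (n + 1) n with hk
  have hFk : ∀ n i, i < n → F n i = k i := by
    intro n
    induction n with
    | zero => omega
    | succ n ih =>
      intro i hi
      rcases Nat.lt_succ_iff_lt_or_eq.1 hi with hi' | rfl
      · rw [hFs n, Function.update_of_ne (Nat.ne_of_lt hi'), ih i hi']
      · rfl
  have main : ∀ n, c < μ (f '' D k n) := by
    intro n
    induction n with
    | zero =>
      have h0 : D k 0 = Set.univ := by ext x; simp [hD]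
      rw [h0, Set.image_univ]
      exact hc
    | succ n ih =>
      have h1 : D k n = D (F n) n := hDcongr _ _ _ fun i hi => (hFk n i hi).symm
      rw [h1] at ih
      have h2 := hh (F n) n ih
      have h3 : D (Function.update (F n) n (h (F n) n)) (n + 1) = D k (n + 1) := by
        rw [← hFs n]
        exact hDcongr _ _ _ fun i hi => hFk (n + 1) i hi
      rwa [h3] at h2
  -- the compact set
  set C : Set (ℕ → ℕ) := {x | ∀ i, x i ≤ k i} with hC
  have hCcomp : IsCompact C := by
    have : C = Set.pi Set.univ fun i => Set.Iic (k i) := by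
      ext x; simp [hC, Set.mem_pi, Pi.le_def]
    rw [this]
    exact isCompact_univ_pi fun i => (Set.finite_Iic _).isCompact
  refine ⟨f '' C, ?_, hCcomp.image fc, ?_⟩
  · exact Set.image_subset_range f C
  -- measure estimate via L
  set L : Set (ℕ → ℤ) := ⋂ n, closure (f '' D k n) with hL
  have hLsub : L ⊆ f '' C := by
    intro y hy
    simp only [hL, Set.mem_iInter] at hy
    obtain ⟨V, hV⟩ := (𝓝 y).exists_antitone_basis
    have hx : ∀ n, ∃ x ∈ D k n, f x ∈ V n := by
      intro n
      have hne := mem_closure_iff_nhds.1 (hy n) (V n) (hV.toHasBasis.mem_of_mem trivial)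
      obtain ⟨z, hz1, x, hx1, rfl⟩ := hne
      exact ⟨x, hx1, hz1⟩
    choose x hxD hxV using hx
    set z : ℕ → ℕ → ℕ := fun n i => min (x n i) (k i) with hz
    have hzC : ∀ n, z n ∈ C := fun n i => min_le_right _ _
    obtain ⟨a, haC, φ, hφ, hlim⟩ := hCcomp.tendsto_subseq hzC
    have hxa : Tendsto (fun j => x (φ j)) atTop (𝓝 a) := by
      rw [tendsto_pi_nhds]
      intro i
      have hzi : Tendsto (fun j => z (φ j) i) atTop (𝓝 (a i)) := tendsto_pi_nhds.1 hlim i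
      apply hzi.congr'
      filter_upwards [eventually_gt_atTop i] with j hj
      have hij : i < φ j := lt_of_lt_of_le hj (hφ.le_apply)
      simp [hz, min_eq_left (hxD (φ j) i hij)]
    have h1 : Tendsto (fun j => f (x (φ j))) atTop (𝓝 (f a)) := (fc.tendsto a).comp hxa
    have h2 : Tendsto (fun n => f (x n)) atTop (𝓝 y) := hV.tendsto hxV
    have h3 : Tendsto (fun j => f (x (φ j))) atTop (𝓝 y) := h2.comp hφ.tendsto_atTop
    exact ⟨a, haC, tendsto_nhds_unique h1 h3⟩
  have hLmeas : μ L = ⨅ n, μ (closure (f '' D k n)) := by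
    apply Antitone.measure_iInter
    · intro m n hmn
      apply closure_mono
      apply Set.image_mono
      intro u hu i hi
      exact hu i (lt_of_lt_of_le hi hmn)
    · exact fun n => isClosed_closure.measurableSet.nullMeasurableSet
    · exact ⟨0, measure_ne_top μ _⟩
  have hcL : c ≤ μ L := by
    rw [hLmeas]
    exact le_iInf fun n => (main n).le.trans (measure_mono subset_closure)
  exact hcL.trans (measure_mono hLsub)
lemma analyticSet_nullMeasurableSet
    (μ : Measure (ℕ → ℤ)) [IsFiniteMeasure μ] {A : Set (ℕ → ℤ)}
    (hA : AnalyticSet A) : NullMeasurableSet A μ := by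
  by_cases h0 : μ A = 0
  · exact NullMeasurableSet.of_null h0
  have hex : ∀ n : ℕ, ∃ K, K ⊆ A ∧ IsCompact K ∧ μ A - ((n : ℝ≥0∞) + 1)⁻¹ ≤ μ K := by
    intro n
    apply analyticSet_exists_isCompact_subset μ hA
    exact ENNReal.sub_lt_self (measure_ne_top μ A) h0
      (ENNReal.inv_ne_zero.2 (by simp))
  choose K hKA hKc hKμ using hex
  set B := ⋃ n, K n with hB
  have hBm : MeasurableSet B :=
    MeasurableSet.iUnion fun n => (hKc n).isClosed.measurableSet
  have hBA : B ⊆ A := Set.iUnion_subset hKA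
  have hμAB : μ A ≤ μ B := by
    apply ENNReal.le_of_forall_pos_le_add
    intro ε hε _
    obtain ⟨n, hn⟩ := ENNReal.exists_inv_nat_lt (a := (ε : ℝ≥0∞))
      (by exact_mod_cast hε.ne')
    have h1 : μ A - ((n : ℝ≥0∞) + 1)⁻¹ ≤ μ B :=
      (hKμ n).trans (measure_mono (Set.subset_iUnion K n))
    have h2 : ((n : ℝ≥0∞) + 1)⁻¹ ≤ (ε : ℝ≥0∞) :=
      le_of_lt (lt_of_le_of_lt (ENNReal.inv_le_inv.2 (by simp)) hn)
    calc μ A ≤ μ A - ((n : ℝ≥0∞) + 1)⁻¹ + ((n : ℝ≥0∞) + 1)⁻¹ :=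
          le_tsub_add
      _ ≤ μ B + (ε : ℝ≥0∞) := add_le_add h1 h2
  obtain ⟨T, hAT, hTm, hTμ⟩ := exists_measurable_superset μ A
  have hTB0 : μ (T \ B) = 0 := by
    have hBT : B ⊆ T := hBA.trans hAT
    rw [measure_diff hBT hBm.nullMeasurableSet (measure_ne_top μ B), hTμ]
    exact tsub_eq_zero_of_le hμAB
  have : A = B ∪ (A \ B) := (Set.union_diff_cancel hBA).symm
  rw [this]
  exact hBm.nullMeasurableSet.union
    (NullMeasurableSet.of_null
      (measure_mono_null (Set.diff_subset_diff_left hAT) hTB0))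
/-- If `S ⊆ ℤ^ω` is analytic and not Haar-null then for every `b ∈ ω^ω` there are a
compact `K ⊆ Π_n [0, b n]` with `μ_b K > 0` and a translation `t` with `K + t ⊆ S`. -/
theorem nonHaarNull_contains_translate_of_compact
    (S : Set (ℕ → ℤ)) (hS : MeasureTheory.AnalyticSet S) (hnull : ¬ IsHaarNull S)
    (b : ℕ → ℕ) :
    ∃ (K : Set (ℕ → ℤ)) (t : ℕ → ℤ), IsCompact K ∧
      K ⊆ {g : ℕ → ℤ | ∀ n, 0 ≤ g n ∧ g n ≤ (b n : ℤ)} ∧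
      0 < muB b K ∧ (fun x => x + t) '' K ⊆ S := by
  classical
  haveI hprob : IsProbabilityMeasure (muB b) := muB_prob b
  -- `S` is universally measurable
  have hU : UnivMeasurable S := by
    intro μ hμ
    haveI := hμ
    exact analyticSet_nullMeasurableSet μ hS
  -- get a translate of positive measure
  have hex : ¬ ∀ g : ℕ → ℤ, muB b ((fun x => x + g) '' S) = 0 := by
    intro h
    exact hnull ⟨S, muB b, subset_rfl, hU, hprob, h⟩
  push_neg at hex
  obtain ⟨g, hg⟩ := hex
  set A := (fun x => x + g) '' S with hA
  have hAanal : MeasureTheory.AnalyticSet A :=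
    hS.image_of_continuous (continuous_id.add continuous_const)
  obtain ⟨K', hK'A, hK'c, hK'μ⟩ := analyticSet_exists_isCompact_subset (muB b) hAanal
    (c := muB b A / 2) (ENNReal.half_lt_self hg (measure_ne_top _ _))
  set Box := {g : ℕ → ℤ | ∀ n, 0 ≤ g n ∧ g n ≤ (b n : ℤ)} with hBox
  have hBoxeq : Box = ⋂ n, (fun g : ℕ → ℤ => g n) ⁻¹' Set.Icc 0 (b n : ℤ) := by
    ext x
    simp [hBox, Set.mem_iInter, Set.mem_Icc]
  have hBoxclosed : IsClosed Box := by
    rw [hBoxeq]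
    exact isClosed_iInter fun n =>
      (isClosed_discrete _).preimage (continuous_apply n)
  have hBoxm : MeasurableSet Box := hBoxclosed.measurableSet
  have hBoxc : muB b Boxᶜ = 0 := by
    rw [muB, Measure.map_apply (measurable_digitMap b) hBoxm.compl]
    have : digitMap b ⁻¹' Boxᶜ = ∅ := by
      ext x
      simp only [Set.mem_preimage, Set.mem_compl_iff, Set.mem_empty_iff_false, iff_false,
        not_not, hBox, Set.mem_setOf_eq]
      exact fun n => digitMap_mem b x n
    rw [this]
    simp
  refine ⟨K' ∩ Box, -g, hK'c.inter_right hBoxclosed, Set.inter_subset_right, ?_, ?_⟩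
  · have h1 : muB b (K' ∩ Box) + muB b (K' \ Box) = muB b K' :=
      measure_inter_add_diff K' hBoxm
    have h2 : muB b (K' \ Box) = 0 :=
      measure_mono_null (fun x hx => hx.2) hBoxc
    have h3 : muB b (K' ∩ Box) = muB b K' := by
      rw [← h1, h2, add_zero]
    rw [h3]
    calc (0 : ℝ≥0∞) < muB b A / 2 := ENNReal.half_pos hg
      _ ≤ muB b K' := hK'μ
  · rintro y ⟨x, ⟨hxK', _⟩, rfl⟩
    obtain ⟨s, hs, rfl⟩ := hK'A hxK'
    simpa using hs
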